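/- Quantile attainability: Let (Ω, 𝒜, P) be non-atomic, Y = [y_L, y_U] a random interval, α ∈ (0,1), and m ∈ [T_Y^{-1}(α), C_Y^{-1}(α)], where T_Y^{-1}(α) and C_Y^{-1}(α) are the α-quantiles of y_L and y_U. Then there exists a measurable selection y of Y with left-continuous α-quantile F_y^{-1}(α) = m. -/

import Mathlib

open MeasureTheory Set

/-- Left-continuous α-quantile of a real random variable. -/
noncomputable def quantileFn {Ω : Type*} [MeasurableSpace Ω] (μ : Measure Ω)
    (Z : Ω → ℝ) (α : ℝ) : ℝ :=
  sInf {t : ℝ | ENNReal.ofReal α ≤ μ {ω | Z ω ≤ t}}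

lemma quantile_set_nonempty {Ω : Type*} [MeasurableSpace Ω] (μ : Measure Ω)
    [IsProbabilityMeasure μ] (Z : Ω → ℝ) {α : ℝ} (hα1 : α < 1) :
    {t : ℝ | ENNReal.ofReal α ≤ μ {ω | Z ω ≤ t}}.Nonempty := by
  have hmono : Monotone (fun n : ℕ => {ω | Z ω ≤ (n : ℝ)}) := by
    intro a b hab ω hω
    simp only [Set.mem_setOf_eq] at *
    exact hω.trans (Nat.cast_le.mpr hab)
  have hU : (⋃ n : ℕ, {ω | Z ω ≤ (n : ℝ)}) = Set.univ := by
    ext ω; simp only [Set.mem_iUnion, Set.mem_univ, iff_true, Set.mem_setOf_eq]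
    obtain ⟨n, hn⟩ := exists_nat_ge (Z ω)
    exact ⟨n, hn⟩
  have htend := tendsto_measure_iUnion_atTop (μ := μ) hmono
  rw [hU, measure_univ] at htend
  have hlt : ENNReal.ofReal α < 1 := ENNReal.ofReal_lt_one.mpr hα1
  obtain ⟨n, hn⟩ := (htend.eventually_const_le hlt).exists
  exact ⟨n, hn⟩

lemma quantile_set_bddBelow {Ω : Type*} [MeasurableSpace Ω] (μ : Measure Ω)
    [IsProbabilityMeasure μ] (Z : Ω → ℝ) (hZ : Measurable Z) {α : ℝ} (hα0 : 0 < α) :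
    BddBelow {t : ℝ | ENNReal.ofReal α ≤ μ {ω | Z ω ≤ t}} := by
  have hanti : Antitone (fun n : ℕ => {ω | Z ω ≤ -(n : ℝ)}) := by
    intro a b hab ω hω
    simp only [Set.mem_setOf_eq] at *
    exact hω.trans (neg_le_neg (Nat.cast_le.mpr hab))
  have hI : (⋂ n : ℕ, {ω | Z ω ≤ -(n : ℝ)}) = (∅ : Set Ω) := by
    ext ω; simp only [Set.mem_iInter, Set.mem_empty_iff_false, iff_false, Set.mem_setOf_eq]
    intro h
    obtain ⟨n, hn⟩ := exists_nat_gt (-(Z ω))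
    have := h n; linarith
  have htend := tendsto_measure_iInter_atTop (μ := μ) (s := fun n : ℕ => {ω | Z ω ≤ -(n : ℝ)})
    (fun n => ((hZ measurableSet_Iic).nullMeasurableSet : NullMeasurableSet {ω | Z ω ≤ -(n : ℝ)} μ)) hanti ⟨0, measure_ne_top μ _⟩
  rw [hI, measure_empty] at htend
  have hpos : (0 : ENNReal) < ENNReal.ofReal α := ENNReal.ofReal_pos.mpr hα0
  obtain ⟨n, hn⟩ := (htend.eventually_lt_const hpos).exists
  refine ⟨-(n : ℝ), fun t ht => ?_⟩
  by_contra hlt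
  push_neg at hlt
  have : μ {ω | Z ω ≤ t} ≤ μ {ω | Z ω ≤ -(n : ℝ)} :=
    measure_mono (fun ω hω => le_trans hω hlt.le)
  exact absurd (le_trans ht this) (not_le.mpr hn)

/-- Quantile attainability: on a non-atomic probability space, for any
m between the α-quantiles of y_L and y_U there is a measurable selection
of [y_L, y_U] whose α-quantile is exactly m. -/
theorem stmt_4
    {Ω : Type*} [MeasurableSpace Ω] (μ : Measure Ω) [IsProbabilityMeasure μ]
    [NullSingletonClass μ]
    (yL yU : Ω → ℝ) (hmL : Measurable yL) (hmU : Measurable yU)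
    (hle : ∀ᵐ ω ∂μ, yL ω ≤ yU ω)
    (α : ℝ) (hα : α ∈ Set.Ioo (0 : ℝ) 1)
    (m : ℝ) (hm : m ∈ Set.Icc (quantileFn μ yL α) (quantileFn μ yU α)) :
    ∃ y : Ω → ℝ, Measurable y ∧ (∀ᵐ ω ∂μ, yL ω ≤ y ω ∧ y ω ≤ yU ω) ∧
      quantileFn μ y α = m := by
  obtain ⟨hα0, hα1⟩ := hα
  set y : Ω → ℝ := fun ω => max (yL ω) (min m (yU ω)) with hy
  have hmy : Measurable y := hmL.max (measurable_const.min hmU)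
  refine ⟨y, hmy, ?_, ?_⟩
  · filter_upwards [hle] with ω hω
    exact ⟨le_max_left _ _, max_le hω (min_le_right _ _)⟩
  -- key set identities
  have hset_ge : ∀ t, m ≤ t → {ω | y ω ≤ t} = {ω | yL ω ≤ t} := by
    intro t ht; ext ω
    simp only [hy, Set.mem_setOf_eq, max_le_iff]
    exact ⟨fun h => h.1, fun h => ⟨h, le_trans (min_le_left _ _) ht⟩⟩
  have hset_lt : ∀ t, t < m → {ω | y ω ≤ t} = {ω | yL ω ≤ t} ∩ {ω | yU ω ≤ t} := by
    intro t ht; ext ω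
    simp only [hy, Set.mem_setOf_eq, max_le_iff, Set.mem_inter_iff, min_le_iff]
    constructor
    · rintro ⟨h1, h2⟩
      rcases h2 with h2 | h2
      · linarith
      · exact ⟨h1, h2⟩
    · rintro ⟨h1, h2⟩; exact ⟨h1, Or.inr h2⟩
  -- quantile set facts
  have hneL := quantile_set_nonempty μ yL hα1
  have hbbU := quantile_set_bddBelow μ yU hmU hα0
  -- Step A: any t > m is in S_y
  have stepA : ∀ t, m < t → ENNReal.ofReal α ≤ μ {ω | y ω ≤ t} := by
    intro t ht
    have h1 : quantileFn μ yL α < t := lt_of_le_of_lt hm.1 ht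
    rw [quantileFn, csInf_lt_iff (quantile_set_bddBelow μ yL hmL hα0) hneL] at h1
    obtain ⟨s, hs, hst⟩ := h1
    rw [hset_ge t ht.le]
    exact le_trans hs (measure_mono fun ω hω => le_trans hω hst.le)
  -- Step B: any t in S_y satisfies m ≤ t
  have stepB : ∀ t, ENNReal.ofReal α ≤ μ {ω | y ω ≤ t} → m ≤ t := by
    intro t ht
    by_contra hlt
    push_neg at hlt
    rw [hset_lt t hlt] at ht
    have h2 : ENNReal.ofReal α ≤ μ {ω | yU ω ≤ t} :=
      le_trans ht (measure_mono Set.inter_subset_right)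
    have h3 : quantileFn μ yU α ≤ t := csInf_le hbbU h2
    linarith [hm.2]
  -- conclude
  have hne_y : {t : ℝ | ENNReal.ofReal α ≤ μ {ω | y ω ≤ t}}.Nonempty :=
    ⟨m + 1, stepA (m + 1) (by linarith)⟩
  have hbb_y : BddBelow {t : ℝ | ENNReal.ofReal α ≤ μ {ω | y ω ≤ t}} :=
    ⟨m, fun t ht => stepB t ht⟩
  refine le_antisymm ?_ (le_csInf hne_y fun t ht => stepB t ht)
  refine le_of_forall_pos_le_add fun ε hε => ?_
  exact csInf_le hbb_y (stepA (m + ε) (by linarith))
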